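/- Let F : ℝ^d → ℝ^d be Lipschitz with constant L. There exists τ₀ > 0, depending only on L, such that for all t with 0 < t ≤ τ₀ and all x, the map v ↦ X(-t;x,v) is injective; more precisely |X(-t;x,v') - X(-t;x,v)| ≥ (t/2)|v - v'| for all v, v'. -/

import Mathlib

open MeasureTheory Real
open scoped ENNReal NNReal

set_option maxHeartbeats 1000000 in
/-- Local-in-time injectivity of `v ↦ X(-t;x,v)`: there exists `τ₀ > 0` such that for
`0 < t ≤ τ₀`, `|X(-t;x,v') - X(-t;x,v)| ≥ (t/2)|v - v'|`; in particular the map is injective. -/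
theorem characteristics_local_injectivity (d : ℕ) (hd : 1 ≤ d)
    (F : EuclideanSpace ℝ (Fin d) → EuclideanSpace ℝ (Fin d)) (L : ℝ≥0)
    (hF : LipschitzWith L F)
    (X V : ℝ → EuclideanSpace ℝ (Fin d) → EuclideanSpace ℝ (Fin d) → EuclideanSpace ℝ (Fin d))
    (hX0 : ∀ x v, X 0 x v = x) (hV0 : ∀ x v, V 0 x v = v)
    (hX' : ∀ t x v, HasDerivAt (fun s => X s x v) (V t x v) t)
    (hV' : ∀ t x v, HasDerivAt (fun s => V s x v) (F (X t x v)) t) :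
    ∃ τ₀ : ℝ, 0 < τ₀ ∧ ∀ t : ℝ, 0 < t → t ≤ τ₀ →
      (∀ x v v', (t / 2) * ‖v - v'‖ ≤ ‖X (-t) x v' - X (-t) x v‖) ∧
      (∀ x, Function.Injective (fun v => X (-t) x v)) := by
  set K : ℝ := (L : ℝ) + 1 with hK
  have hL0 : (0:ℝ) ≤ L := L.coe_nonneg
  have hK1 : (1:ℝ) ≤ K := by rw [hK]; linarith
  have hK0 : (0:ℝ) < K := by linarith
  have hexp : (0:ℝ) < Real.exp K := Real.exp_pos K
  set τ₀ : ℝ := min 1 (1 / (2 * K * Real.exp K)) with hτ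
  have hτpos : 0 < τ₀ := lt_min one_pos (by positivity)
  refine ⟨τ₀, hτpos, fun t ht htτ => ?_⟩
  have ht1 : t ≤ 1 := htτ.trans (min_le_left _ _)
  -- a helper for norms of negated differences
  have hnn : ∀ a b : EuclideanSpace ℝ (Fin d),
      ‖(-1:ℝ) • a - (-1:ℝ) • b‖ = ‖a - b‖ := by
    intro a b
    rw [neg_one_smul, neg_one_smul, neg_sub_neg, norm_sub_rev]
  have key : ∀ x v v', (t / 2) * ‖v - v'‖ ≤ ‖X (-t) x v' - X (-t) x v‖ := by
    intro x v v'
    set w : EuclideanSpace ℝ (Fin d) := v' - v with hw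
    have hXd : ∀ (s : ℝ) (u : EuclideanSpace ℝ (Fin d)),
        HasDerivAt (fun s : ℝ => X (-s) x u) ((-1 : ℝ) • V (-s) x u) s := fun s u =>
      (hX' (-s) x u).scomp s (hasDerivAt_neg s)
    have hVd : ∀ (s : ℝ) (u : EuclideanSpace ℝ (Fin d)),
        HasDerivAt (fun s : ℝ => V (-s) x u) ((-1 : ℝ) • F (X (-s) x u)) s := fun s u =>
      (hV' (-s) x u).scomp s (hasDerivAt_neg s)
    set f : ℝ → (EuclideanSpace ℝ (Fin d)) × (EuclideanSpace ℝ (Fin d)) :=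
      fun s => (X (-s) x v' - X (-s) x v, V (-s) x v' - V (-s) x v) with hf
    set f' : ℝ → (EuclideanSpace ℝ (Fin d)) × (EuclideanSpace ℝ (Fin d)) :=
      fun s => ((-1 : ℝ) • V (-s) x v' - (-1 : ℝ) • V (-s) x v,
        (-1 : ℝ) • F (X (-s) x v') - (-1 : ℝ) • F (X (-s) x v)) with hf'
    have hfd : ∀ s, HasDerivAt f (f' s) s := fun s =>
      (((hXd s v').sub (hXd s v)).prodMk (((hVd s v').sub (hVd s v))))
    have hfc : Continuous f := continuous_iff_continuousAt.2 fun s => (hfd s).continuousAt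
    have hΔF : ∀ s : ℝ, ‖F (X (-s) x v') - F (X (-s) x v)‖ ≤
        (L : ℝ) * ‖X (-s) x v' - X (-s) x v‖ := by
      intro s
      have := hF.dist_le_mul (X (-s) x v') (X (-s) x v)
      simpa [dist_eq_norm] using this
    have hbnd : ∀ s ∈ Set.Ico (0:ℝ) t, ‖f' s‖ ≤ K * ‖f s‖ + 0 := by
      intro s _
      rw [add_zero]
      have h1 : ‖f' s‖ = max ‖V (-s) x v' - V (-s) x v‖
          ‖F (X (-s) x v') - F (X (-s) x v)‖ := by
        rw [hf']
        simp only [Prod.norm_def]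
        rw [hnn, hnn]
      have h2 : ‖f s‖ = max ‖X (-s) x v' - X (-s) x v‖ ‖V (-s) x v' - V (-s) x v‖ := by
        rw [hf]; simp only [Prod.norm_def]
      rw [h1, h2]
      have hmax0 : (0:ℝ) ≤ max ‖X (-s) x v' - X (-s) x v‖ ‖V (-s) x v' - V (-s) x v‖ :=
        (norm_nonneg _).trans (le_max_left _ _)
      apply max_le
      · calc ‖V (-s) x v' - V (-s) x v‖
            ≤ max ‖X (-s) x v' - X (-s) x v‖ ‖V (-s) x v' - V (-s) x v‖ := le_max_right _ _
          _ ≤ K * max ‖X (-s) x v' - X (-s) x v‖ ‖V (-s) x v' - V (-s) x v‖ :=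
            le_mul_of_one_le_left hmax0 hK1
      · calc ‖F (X (-s) x v') - F (X (-s) x v)‖
            ≤ (L:ℝ) * ‖X (-s) x v' - X (-s) x v‖ := hΔF s
          _ ≤ K * max ‖X (-s) x v' - X (-s) x v‖ ‖V (-s) x v' - V (-s) x v‖ :=
            mul_le_mul (by rw [hK]; linarith) (le_max_left _ _) (norm_nonneg _) hK0.le
    have hf0 : ‖f 0‖ ≤ ‖w‖ := by
      have : f 0 = (0, w) := by
        rw [hf]; simp [hX0, hV0, hw]
      rw [this]
      simp only [Prod.norm_def, norm_zero]
      exact max_le (norm_nonneg _) le_rfl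
    have gron := norm_le_gronwallBound_of_norm_deriv_right_le
      hfc.continuousOn (fun s _ => (hfd s).hasDerivWithinAt) hf0 hbnd
    have hDb : ∀ s ∈ Set.Icc (0:ℝ) t,
        ‖X (-s) x v' - X (-s) x v‖ ≤ ‖w‖ * Real.exp (K * t) := by
      intro s hs
      have h1 := gron s hs
      rw [sub_zero, gronwallBound_ε0] at h1
      have h2 : ‖X (-s) x v' - X (-s) x v‖ ≤ ‖f s‖ := by
        rw [hf]; exact le_max_left _ _
      have h3 : Real.exp (K * s) ≤ Real.exp (K * t) :=
        Real.exp_le_exp.2 (mul_le_mul_of_nonneg_left hs.2 hK0.le)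
      exact (h2.trans h1).trans (mul_le_mul_of_nonneg_left h3 (norm_nonneg w))
    set C : ℝ := (L : ℝ) * (‖w‖ * Real.exp (K * t)) with hC
    have hC0 : 0 ≤ C := by positivity
    have hEw : ∀ s ∈ Set.Icc (0:ℝ) t, ‖(V (-s) x v' - V (-s) x v) - w‖ ≤ C * s := by
      intro s hs
      have hmv := Convex.norm_image_sub_le_of_norm_hasDerivWithin_le
        (f := fun σ : ℝ => V (-σ) x v' - V (-σ) x v)
        (f' := fun σ : ℝ => (-1 : ℝ) • F (X (-σ) x v') - (-1 : ℝ) • F (X (-σ) x v))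
        (s := Set.Icc (0:ℝ) t) (C := C)
        (fun σ _ => (((hVd σ v').sub (hVd σ v))).hasDerivWithinAt)
        (fun σ hσ => by
          rw [hnn]
          calc ‖F (X (-σ) x v') - F (X (-σ) x v)‖
              ≤ (L:ℝ) * ‖X (-σ) x v' - X (-σ) x v‖ := hΔF σ
            _ ≤ C := by rw [hC]; exact mul_le_mul_of_nonneg_left (hDb σ hσ) hL0)
        (convex_Icc _ _) (Set.left_mem_Icc.2 ht.le) hs
      simp only [neg_zero, hV0] at hmv
      calc ‖(V (-s) x v' - V (-s) x v) - w‖ ≤ C * ‖s - 0‖ := by rw [hw]; exact hmv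
        _ = C * s := by rw [sub_zero, Real.norm_eq_abs, abs_of_nonneg hs.1]
    have hderiv : ∀ σ : ℝ, HasDerivAt (fun σ : ℝ => (X (-σ) x v' - X (-σ) x v) + σ • w)
        (((-1:ℝ) • V (-σ) x v' - (-1:ℝ) • V (-σ) x v) + w) σ := by
      intro σ
      have h : HasDerivAt (fun σ : ℝ => (X (-σ) x v' - X (-σ) x v) + σ • w)
          (((-1:ℝ) • V (-σ) x v' - (-1:ℝ) • V (-σ) x v) + (1:ℝ) • w) σ :=
        ((hXd σ v').sub (hXd σ v)).add ((hasDerivAt_id σ).smul_const w)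
      simpa using h
    have hD : ‖(X (-t) x v' - X (-t) x v) + t • w‖ ≤ (C * t) * t := by
      have hmv := Convex.norm_image_sub_le_of_norm_hasDerivWithin_le
        (f := fun σ : ℝ => (X (-σ) x v' - X (-σ) x v) + σ • w)
        (f' := fun σ : ℝ => ((-1:ℝ) • V (-σ) x v' - (-1:ℝ) • V (-σ) x v) + w)
        (s := Set.Icc (0:ℝ) t) (C := C * t)
        (fun σ _ => (hderiv σ).hasDerivWithinAt)
        (fun σ hσ => by
          have h1 : ((-1 : ℝ) • V (-σ) x v' - (-1 : ℝ) • V (-σ) x v) + w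
              = -((V (-σ) x v' - V (-σ) x v) - w) := by
            rw [neg_one_smul, neg_one_smul]; abel
          simp only [h1, norm_neg]
          calc ‖(V (-σ) x v' - V (-σ) x v) - w‖ ≤ C * σ := hEw σ hσ
            _ ≤ C * t := mul_le_mul_of_nonneg_left hσ.2 hC0)
        (convex_Icc _ _) (Set.left_mem_Icc.2 ht.le) (Set.right_mem_Icc.2 ht.le)
      simp only [neg_zero, hX0, sub_self, zero_smul, add_zero, zero_add, sub_zero] at hmv
      rw [Real.norm_eq_abs, abs_of_nonneg ht.le] at hmv
      exact hmv
    have hsmall : C * t ≤ ‖w‖ / 2 := by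
      have h1 : Real.exp (K * t) ≤ Real.exp K :=
        Real.exp_le_exp.2 (by nlinarith)
      have h2 : t ≤ 1 / (2 * K * Real.exp K) := htτ.trans (min_le_right _ _)
      have h3 : (L:ℝ) ≤ K := by rw [hK]; linarith
      have h2' : t * (2 * K * Real.exp K) ≤ 1 :=
        (le_div_iff₀ (by positivity : (0:ℝ) < 2 * K * Real.exp K)).1 h2
      have h4 : (L : ℝ) * Real.exp K * t ≤ 1/2 := by
        nlinarith [mul_le_mul_of_nonneg_right h3 (mul_nonneg hexp.le ht.le)]
      calc C * t = ((L:ℝ) * Real.exp (K*t) * t) * ‖w‖ := by rw [hC]; ring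
        _ ≤ (1/2) * ‖w‖ := by
          apply mul_le_mul_of_nonneg_right _ (norm_nonneg w)
          calc (L:ℝ) * Real.exp (K*t) * t ≤ (L:ℝ) * Real.exp K * t :=
              mul_le_mul_of_nonneg_right (mul_le_mul_of_nonneg_left h1 hL0) ht.le
            _ ≤ 1/2 := h4
        _ = ‖w‖ / 2 := by ring
    have htri : t * ‖w‖ - ‖(X (-t) x v' - X (-t) x v) + t • w‖
        ≤ ‖X (-t) x v' - X (-t) x v‖ := by
      have h := norm_sub_norm_le (t • w) ((X (-t) x v' - X (-t) x v) + t • w)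
      have h2 : t • w - ((X (-t) x v' - X (-t) x v) + t • w)
          = -(X (-t) x v' - X (-t) x v) := by abel
      rw [h2, norm_neg] at h
      have h3 : ‖t • w‖ = t * ‖w‖ := by
        rw [norm_smul, Real.norm_eq_abs, abs_of_nonneg ht.le]
      linarith [h3 ▸ h]
    have hwvv : ‖v - v'‖ = ‖w‖ := by rw [hw, norm_sub_rev]
    rw [hwvv]
    linarith [htri, hD, mul_le_mul_of_nonneg_right hsmall ht.le]
  refine ⟨key, fun x v v' hvv => ?_⟩
  simp only at hvv
  have h1 := key x v v'
  rw [hvv, sub_self, norm_zero] at h1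
  have h2 : (t/2) * ‖v - v'‖ = 0 :=
    le_antisymm h1 (mul_nonneg (by linarith) (norm_nonneg _))
  rcases mul_eq_zero.1 h2 with h3 | h3
  · linarith
  · exact sub_eq_zero.1 (norm_eq_zero.1 h3)
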